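/- arXiv:2108.00531 — 6 statements merged into one kernel-verified Lean document; each statement's English description precedes it below -/
import Mathlib

section
/- If I and J are componentwise polymatroidal monomial ideals in K[x,y], then the product IJ is also componentwise polymatroidal. In particular, every power of a componentwise polymatroidal ideal in K[x,y] is componentwise polymatroidal. -/
/-- A monomial in `K[x_1,...,x_n]` is identified with its exponent vector. -/
abbrev Mon (n : ℕ) := Fin n → ℕ

/-- Total degree of a monomial. -/
def degree {n : ℕ} (u : Mon n) : ℕ := ∑ i, u i

/-- A monomial ideal is identified with the set of exponent vectors of the monomials it
contains; this set is closed under multiplication by monomials. -/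
def IsMonomialIdeal {n : ℕ} (I : Set (Mon n)) : Prop :=
  ∀ u ∈ I, ∀ w : Mon n, u + w ∈ I

/-- The minimal monomial generating set `G(I)` of a monomial ideal: monomials of `I`
minimal with respect to divisibility (pointwise `≤` of exponent vectors). -/
def minGens {n : ℕ} (I : Set (Mon n)) : Set (Mon n) :=
  {u | u ∈ I ∧ ∀ v ∈ I, v ≤ u → v = u}

/-- `exch v i j` is the exponent vector of `x_j * (v / x_i)` (for `i ≠ j`). -/
def exch {n : ℕ} (v : Mon n) (i j : Fin n) : Mon n :=
  fun k => if k = i then v k - 1 else if k = j then v k + 1 else v k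

/-- `component I d` is the ideal `I_⟨d⟩` generated by the degree-`d` monomials of `I`. -/
def component {n : ℕ} (I : Set (Mon n)) (d : ℕ) : Set (Mon n) :=
  {w | ∃ u ∈ I, degree u = d ∧ u ≤ w}

/-- `I` is generated in a single degree. -/
def GeneratedInSingleDegree {n : ℕ} (I : Set (Mon n)) : Prop :=
  ∃ d, ∀ u ∈ minGens I, degree u = d

/-- A polymatroidal ideal: generated in a single degree and its generators satisfy the
exchange property. -/
def IsPolymatroidal {n : ℕ} (I : Set (Mon n)) : Prop :=
  GeneratedInSingleDegree I ∧
  ∀ u ∈ minGens I, ∀ v ∈ minGens I, ∀ i : Fin n, v i < u i →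
    ∃ j : Fin n, u j < v j ∧ exch u i j ∈ I

/-- Componentwise polymatroidal: each graded component ideal `I_⟨d⟩` is polymatroidal. -/
def ComponentwisePolymatroidal {n : ℕ} (I : Set (Mon n)) : Prop :=
  ∀ d : ℕ, IsPolymatroidal (component I d)

/-- Non-pure dual exchange property: for `u, v ∈ G(I)` with `deg u ≤ deg v` and
`deg_{x_i} v < deg_{x_i} u` there is `j` with `deg_{x_j} v > deg_{x_j} u` and
`x_i * (v / x_j) ∈ I`. -/
def NonPureDualExchange {n : ℕ} (I : Set (Mon n)) : Prop :=
  ∀ u ∈ minGens I, ∀ v ∈ minGens I, degree u ≤ degree v →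
    ∀ i : Fin n, v i < u i → ∃ j : Fin n, u j < v j ∧ exch v j i ∈ I

/-- Non-pure exchange property: for `u, v ∈ G(I)` with `deg u ≤ deg v` and
`deg_{x_i} v > deg_{x_i} u` there is `j` with `deg_{x_j} v < deg_{x_j} u` and
`x_j * (v / x_i) ∈ I`. -/
def NonPureExchange {n : ℕ} (I : Set (Mon n)) : Prop :=
  ∀ u ∈ minGens I, ∀ v ∈ minGens I, degree u ≤ degree v →
    ∀ i : Fin n, u i < v i → ∃ j : Fin n, v j < u j ∧ exch v i j ∈ I

/-- The monomial ideal generated by a set `G` of monomials. -/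
def genBy {n : ℕ} (G : Set (Mon n)) : Set (Mon n) := {w | ∃ u ∈ G, u ≤ w}

/-- The product of two monomial ideals (as sets of monomials). -/
def mulIdeal {n : ℕ} (I J : Set (Mon n)) : Set (Mon n) :=
  {w | ∃ u ∈ I, ∃ v ∈ J, w = u + v}

/-- The product of a monomial ideal with the monomial `u`. -/
def mulMon {n : ℕ} (u : Mon n) (I : Set (Mon n)) : Set (Mon n) :=
  (fun v => u + v) '' I

/-- Strong exchange property: for all generators `u, v` and all `i, j` with
`deg_{x_i} u > deg_{x_i} v` and `deg_{x_j} u < deg_{x_j} v`, `x_j * (u / x_i) ∈ I`. -/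
def StrongExchange {n : ℕ} (I : Set (Mon n)) : Prop :=
  ∀ u ∈ minGens I, ∀ v ∈ minGens I, ∀ i j : Fin n,
    v i < u i → u j < v j → exch u i j ∈ I

/-- The Veronese type ideal `I_{(d; a_1,...,a_n)}`: generated by all monomials of
degree `d` with `deg_{x_i} ≤ a i` for all `i`. -/
def veronese (n d : ℕ) (a : Fin n → ℕ) : Set (Mon n) :=
  {w | ∃ u : Mon n, degree u = d ∧ (∀ i, u i ≤ a i) ∧ u ≤ w}

/-- A list of monomials is an admissible order if each colon ideal
`(u_1,...,u_{i-1}) : u_i` is generated by a subset `S` of the variables. -/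
def AdmissibleOrder {n : ℕ} (L : List (Mon n)) : Prop :=
  ∀ i : Fin L.length, ∃ S : Set (Fin n),
    ∀ w : Mon n, (w + L.get i ∈ genBy {u | u ∈ L.take i.1}) ↔ ∃ k ∈ S, 1 ≤ w k

/-- `I` has linear quotients: some ordering of `G(I)` is admissible. -/
def HasLinearQuotients {n : ℕ} (I : Set (Mon n)) : Prop :=
  ∃ L : List (Mon n), L.Nodup ∧ (∀ u, u ∈ L ↔ u ∈ minGens I) ∧ AdmissibleOrder L

/-- `I` can be extended by linear quotients to `J`: `G(I) ⊆ G(J)` and the elements of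
`G(J) \ G(I)` can be ordered `v_1,...,v_m` such that each colon ideal
`(G(I), v_1,...,v_i) : v_{i+1}` is generated by a subset of the variables. -/
def ExtendsByLinearQuotients {n : ℕ} (I J : Set (Mon n)) : Prop :=
  I ⊆ J ∧ minGens I ⊆ minGens J ∧
  ∃ L : List (Mon n), L.Nodup ∧ (∀ u, u ∈ L ↔ u ∈ minGens J ∧ u ∉ minGens I) ∧
    ∀ i : Fin L.length, ∃ S : Set (Fin n),
      ∀ w : Mon n,
        (w + L.get i ∈ genBy (minGens I ∪ {u | u ∈ L.take i.1})) ↔ ∃ k ∈ S, 1 ≤ w k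

/-- The minimal generators of `I ⊆ K[x,y]` are `u_i = x^{a i} y^{b i}`, `i = 0,...,m`,
with `a` strictly decreasing, `b` strictly increasing, `a m = 0` and `b 0 = 0`
(so `I` is `(x,y)`-primary). -/
def yxTightGens (m : ℕ) (a b : ℕ → ℕ) (I : Set (Mon 2)) : Prop :=
  (∀ i k : ℕ, i ≤ m → k ≤ m → i < k → a k < a i ∧ b i < b k) ∧
  a m = 0 ∧ b 0 = 0 ∧
  minGens I = {u | ∃ i ≤ m, u = ![a i, b i]}

/-- `I` is `x`-tight in `[0, r]`: the `x`-exponents of the generators are exactly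
`r, r-1, ..., 1, 0` (i.e. `a (r - i) = i`). -/
def xTight (I : Set (Mon 2)) (r : ℕ) : Prop :=
  ∃ b : ℕ → ℕ, yxTightGens r (fun i => r - i) b I

/-- `I` is `y`-tight in `[0, s]`: the `y`-exponents of the generators are exactly
`0, 1, ..., s`. -/
def yTight (I : Set (Mon 2)) (s : ℕ) : Prop :=
  ∃ a : ℕ → ℕ, yxTightGens s a (fun i => i) I

/-- `I` is `yx`-tight: there is `0 ≤ j ≤ m` with `b i = i` for `i = 0,...,j` and
`a (m - i) = i` for `i = 0,...,m-j`. -/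
def yxTight (I : Set (Mon 2)) : Prop :=
  ∃ (m : ℕ) (a b : ℕ → ℕ), yxTightGens m a b I ∧
    ∃ j ≤ m, (∀ i ≤ j, b i = i) ∧ ∀ i ≤ m - j, a (m - i) = i

/-- Powers of a monomial ideal. -/
def powIdeal {n : ℕ} (I : Set (Mon n)) : ℕ → Set (Mon n)
  | 0 => Set.univ
  | k + 1 => mulIdeal (powIdeal I k) I


section Aux

lemma fin2_eq_or {i j : Fin 2} (hij : i ≠ j) (k : Fin 2) : k = i ∨ k = j := by
  fin_cases i <;> fin_cases j <;> fin_cases k <;> simp_all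

lemma deg2 {i j : Fin 2} (hij : i ≠ j) (u : Mon 2) : degree u = u i + u j := by
  fin_cases i <;> fin_cases j <;> simp_all [degree, Fin.sum_univ_two] <;> omega

lemma mon_ext {i j : Fin 2} (hij : i ≠ j) {u v : Mon 2} (h1 : u i = v i) (h2 : u j = v j) :
    u = v := by
  funext k
  rcases fin2_eq_or hij k with rfl | rfl <;> assumption

lemma mon_ext_deg {i j : Fin 2} (hij : i ≠ j) {u v : Mon 2} (h1 : u i = v i)
    (hd : degree u = degree v) : u = v := by
  have hu := deg2 hij u
  have hv := deg2 hij v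
  exact mon_ext hij h1 (by omega)

lemma degree_add (u v : Mon 2) : degree (u + v) = degree u + degree v := by
  simp [degree, Fin.sum_univ_two, Pi.add_apply]; omega

lemma le_deg_eq {u v : Mon 2} (h : u ≤ v) (hd : degree u = degree v) : u = v := by
  have h0 : u 0 ≤ v 0 := h 0
  have h1 : u 1 ≤ v 1 := h 1
  simp [degree, Fin.sum_univ_two] at hd
  exact mon_ext (i := 0) (j := 1) (by decide) (by omega) (by omega)

lemma mem_minGens_component {K : Set (Mon 2)} {d : ℕ} {u : Mon 2} :
    u ∈ minGens (component K d) ↔ u ∈ K ∧ degree u = d := by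
  constructor
  · rintro ⟨⟨u', hu'K, hd, hle⟩, hmin⟩
    have hu'c : u' ∈ component K d := ⟨u', hu'K, hd, le_refl u'⟩
    have := hmin u' hu'c hle
    subst this
    exact ⟨hu'K, hd⟩
  · rintro ⟨huK, hd⟩
    refine ⟨⟨u, huK, hd, le_refl u⟩, ?_⟩
    rintro v ⟨w, hwK, hwd, hwv⟩ hvu
    have hwu : w = u := le_deg_eq (le_trans hwv hvu) (by omega)
    subst hwu
    exact le_antisymm hvu hwv

lemma component_subset {K : Set (Mon 2)} (hK : IsMonomialIdeal K) {d : ℕ} :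
    component K d ⊆ K := by
  rintro w ⟨u, huK, _, hle⟩
  have : u + (w - u) = w := by
    funext k
    have hk : u k ≤ w k := hle k
    simp only [Pi.add_apply, Pi.sub_apply]
    omega
  rw [← this]
  exact hK u huK _

lemma exch_apply_i {u : Mon 2} {i j : Fin 2} : exch u i j i = u i - 1 := by
  simp [exch]

lemma exch_apply_j {u : Mon 2} {i j : Fin 2} (hij : i ≠ j) : exch u i j j = u j + 1 := by
  simp [exch, hij.symm]

lemma degree_exch {u : Mon 2} {i j : Fin 2} (hij : i ≠ j) (h1 : 1 ≤ u i) :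
    degree (exch u i j) = degree u := by
  rw [deg2 hij (exch u i j), deg2 hij u, exch_apply_i, exch_apply_j hij]
  omega

lemma step_lemma {K : Set (Mon 2)} (hK : IsMonomialIdeal K) (hcp : ComponentwisePolymatroidal K)
    {i j : Fin 2} (hij : i ≠ j) {u v : Mon 2} (hu : u ∈ K) (hv : v ∈ K)
    (hd : degree u = degree v) (hlt : v i < u i) : exch u i j ∈ K := by
  obtain ⟨_, hex⟩ := hcp (degree u)
  have hu' : u ∈ minGens (component K (degree u)) := mem_minGens_component.2 ⟨hu, rfl⟩
  have hv' : v ∈ minGens (component K (degree u)) := mem_minGens_component.2 ⟨hv, hd.symm⟩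
  obtain ⟨j', hj', hmem⟩ := hex u hu' v hv' i hlt
  have hji : j' = j := by
    rcases fin2_eq_or hij j' with rfl | rfl
    · omega
    · rfl
  subst hji
  exact component_subset hK hmem

lemma between_aux {K : Set (Mon 2)} (hK : IsMonomialIdeal K)
    (hcp : ComponentwisePolymatroidal K) {i j : Fin 2} (hij : i ≠ j) :
    ∀ m : ℕ, ∀ a ∈ K, ∀ b ∈ K, degree a = degree b → ∀ w : Mon 2, degree w = degree a →
      a i ≤ w i → w i ≤ b i → b i - w i ≤ m → w ∈ K := by
  intro m
  induction m with
  | zero =>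
    intro a ha b hb hab w hw h1 h2 h3
    have : w = b := mon_ext_deg hij (by omega) (hw.trans hab)
    rw [this]; exact hb
  | succ m ih =>
    intro a ha b hb hab w hw h1 h2 h3
    by_cases hc : w i = b i
    · have : w = b := mon_ext_deg hij hc (hw.trans hab)
      rw [this]; exact hb
    · have hlt : a i < b i := by omega
      have hb' : exch b i j ∈ K := step_lemma hK hcp hij hb ha hab.symm hlt
      have hbi : 1 ≤ b i := by omega
      refine ih a ha (exch b i j) hb' (by rw [degree_exch hij hbi]; exact hab.symm ▸ rfl) w hw h1 ?_ ?_
      · rw [exch_apply_i]; omega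
      · rw [exch_apply_i]; omega

lemma between {K : Set (Mon 2)} (hK : IsMonomialIdeal K)
    (hcp : ComponentwisePolymatroidal K) {i j : Fin 2} (hij : i ≠ j)
    {a b w : Mon 2} (ha : a ∈ K) (hb : b ∈ K) (hab : degree a = degree b)
    (hw : degree w = degree a) (h1 : a i ≤ w i) (h2 : w i ≤ b i) : w ∈ K :=
  between_aux hK hcp hij (b i - w i) a ha b hb hab w hw h1 h2 le_rfl

/-- add `t` to the `j`-th coordinate -/
def addAt (j : Fin 2) (t : ℕ) : Mon 2 := fun k => if k = j then t else 0

lemma addAt_apply_i {i j : Fin 2} (hij : i ≠ j) (t : ℕ) : addAt j t i = 0 := by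
  simp [addAt, hij]

lemma addAt_apply_j (j : Fin 2) (t : ℕ) : addAt j t j = t := by simp [addAt]

lemma degree_addAt_add {i j : Fin 2} (hij : i ≠ j) (u : Mon 2) (t : ℕ) :
    degree (u + addAt j t) = degree u + t := by
  rw [deg2 hij (u + addAt j t), deg2 hij u]
  simp [Pi.add_apply, addAt_apply_i hij, addAt_apply_j]
  omega

lemma prod_step {I J : Set (Mon 2)} (hI : IsMonomialIdeal I) (hJ : IsMonomialIdeal J)
    (hcpI : ComponentwisePolymatroidal I) (hcpJ : ComponentwisePolymatroidal J)
    {i j : Fin 2} (hij : i ≠ j) {u v : Mon 2}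
    (hu : u ∈ mulIdeal I J) (hv : v ∈ mulIdeal I J)
    (hd : degree u = degree v) (hlt : v i < u i) : exch u i j ∈ mulIdeal I J := by
  obtain ⟨p, hp, q, hq, rfl⟩ := hu
  obtain ⟨r, hr, s, hs, rfl⟩ := hv
  have hdeg : degree p + degree q = degree r + degree s := by
    rw [← degree_add, ← degree_add]; exact hd
  have hvi : r i + s i < p i + q i := hlt
  have hpi : p i ≤ degree p := by rw [deg2 hij p]; omega
  have hqi : q i ≤ degree q := by rw [deg2 hij q]; omega
  rcases le_or_gt (degree p) (degree r) with h1 | h1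
  · -- degree p ≤ degree r, degree s ≤ degree q
    set t := degree r - degree p with ht
    rcases lt_or_ge (s i) (q i) with hsq | hsq
    · -- raise s to degree q, step in J
      have hs' : s + addAt j t ∈ J := hJ s hs _
      have hds' : degree (s + addAt j t) = degree s + t := degree_addAt_add hij s t
      have hq' : exch q i j ∈ J := by
        refine step_lemma hJ hcpJ hij hq hs' (by omega) ?_
        simpa [Pi.add_apply, addAt_apply_i hij] using hsq
      refine ⟨p, hp, exch q i j, hq', ?_⟩
      funext k
      rcases fin2_eq_or hij k with rfl | rfl
      · simp only [Pi.add_apply, exch_apply_i]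
        omega
      · simp only [Pi.add_apply, exch_apply_j hij]
        omega
    · -- q i ≤ s i, so r i < p i; use betweenness in I at degree r
      have hrp : r i < p i := by omega
      set x0 := p i + q i - 1 - s i with hx0
      have hx0le : x0 ≤ degree r := by omega
      set w : Mon 2 := fun k => if k = i then x0 else degree r - x0 with hwdef
      have hwi : w i = x0 := by simp [hwdef]
      have hwj : w j = degree r - x0 := by simp [hwdef, hij.symm]
      have hwd : degree w = degree r := by
        rw [deg2 hij w, hwi, hwj]; omega
      have hp' : p + addAt j t ∈ I := hI p hp _
      have hdp' : degree (p + addAt j t) = degree r := by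
        rw [degree_addAt_add hij]; omega
      have hpi' : (p + addAt j t) i = p i := by
        simp [Pi.add_apply, addAt_apply_i hij]
      have hwI : w ∈ I := by
        refine between hI hcpI hij hr hp' (by omega) (by omega) (by omega) ?_
        rw [hwi, hpi']; omega
      refine ⟨w, hwI, s, hs, ?_⟩
      refine mon_ext_deg hij ?_ ?_
      · simp only [Pi.add_apply, exch_apply_i, hwi]
        omega
      · rw [degree_exch hij (by omega : 1 ≤ (p + q) i), degree_add, degree_add, hwd]
        omega
  · -- degree r < degree p, degree q < degree s
    set t := degree p - degree r with ht
    rcases lt_or_ge (r i) (p i) with hrp | hrp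
    · have hr' : r + addAt j t ∈ I := hI r hr _
      have hdr' : degree (r + addAt j t) = degree r + t := degree_addAt_add hij r t
      have hp' : exch p i j ∈ I := by
        refine step_lemma hI hcpI hij hp hr' (by omega) ?_
        simpa [Pi.add_apply, addAt_apply_i hij] using hrp
      refine ⟨exch p i j, hp', q, hq, ?_⟩
      funext k
      rcases fin2_eq_or hij k with rfl | rfl
      · simp only [Pi.add_apply, exch_apply_i]
        omega
      · simp only [Pi.add_apply, exch_apply_j hij]
        omega
    · have hsq : s i < q i := by omega
      set y0 := p i + q i - 1 - r i with hy0
      have hy0lt : y0 < q i := by omega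
      have hy0le : y0 ≤ degree s := by omega
      set w : Mon 2 := fun k => if k = i then y0 else degree s - y0 with hwdef
      have hwi : w i = y0 := by simp [hwdef]
      have hwj : w j = degree s - y0 := by simp [hwdef, hij.symm]
      have hwd : degree w = degree s := by
        rw [deg2 hij w, hwi, hwj]; omega
      have hq' : q + addAt j t ∈ J := hJ q hq _
      have hdq' : degree (q + addAt j t) = degree s := by
        rw [degree_addAt_add hij]; omega
      have hqi' : (q + addAt j t) i = q i := by
        simp [Pi.add_apply, addAt_apply_i hij]
      have hwJ : w ∈ J := by
        refine between hJ hcpJ hij hs hq' (by omega) (by omega) (by omega) ?_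
        rw [hwi, hqi']; omega
      refine ⟨r, hr, w, hwJ, ?_⟩
      refine mon_ext_deg hij ?_ ?_
      · simp only [Pi.add_apply, exch_apply_i, hwi]
        omega
      · rw [degree_exch hij (by omega : 1 ≤ (p + q) i), degree_add, degree_add, hwd]
        omega

lemma mulIdeal_isMonomial {I J : Set (Mon 2)} (hJ : IsMonomialIdeal J) :
    IsMonomialIdeal (mulIdeal I J) := by
  rintro u ⟨p, hp, q, hq, rfl⟩ w
  exact ⟨p, hp, q + w, hJ q hq w, (add_assoc p q w)⟩

lemma cp_mul {I J : Set (Mon 2)} (hI : IsMonomialIdeal I) (hJ : IsMonomialIdeal J)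
    (hcpI : ComponentwisePolymatroidal I) (hcpJ : ComponentwisePolymatroidal J) :
    ComponentwisePolymatroidal (mulIdeal I J) := by
  intro d
  constructor
  · exact ⟨d, fun u hu => (mem_minGens_component.1 hu).2⟩
  · intro u hu v hv i hlt
    obtain ⟨huIJ, hdu⟩ := mem_minGens_component.1 hu
    obtain ⟨hvIJ, hdv⟩ := mem_minGens_component.1 hv
    obtain ⟨j, hij⟩ : ∃ j : Fin 2, i ≠ j := by
      fin_cases i
      exacts [⟨1, by decide⟩, ⟨0, by decide⟩]
    have hdu2 := deg2 hij u
    have hdv2 := deg2 hij v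
    refine ⟨j, by omega, ?_⟩
    have h := prod_step hI hJ hcpI hcpJ hij huIJ hvIJ (by omega) hlt
    exact ⟨exch u i j, h, by rw [degree_exch hij (by omega)]; omega, le_refl _⟩

lemma mulIdeal_univ {I : Set (Mon 2)} (hI : IsMonomialIdeal I) :
    mulIdeal Set.univ I = I := by
  ext w
  constructor
  · rintro ⟨u, -, v, hv, rfl⟩
    rw [add_comm]
    exact hI v hv u
  · intro hw
    exact ⟨0, trivial, w, hw, (zero_add w).symm⟩

lemma powIdeal_isMonomial {I : Set (Mon 2)} (hI : IsMonomialIdeal I) (k : ℕ) :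
    IsMonomialIdeal (powIdeal I (k + 1)) :=
  mulIdeal_isMonomial hI

end Aux

/-- the product of two componentwise polymatroidal ideals in `K[x,y]` is
componentwise polymatroidal; in particular all (positive) powers of a componentwise
polymatroidal ideal in `K[x,y]` are componentwise polymatroidal. -/
theorem stmt_12 (I J : Set (Mon 2)) (hI : IsMonomialIdeal I) (hJ : IsMonomialIdeal J)
    (hcpI : ComponentwisePolymatroidal I) (hcpJ : ComponentwisePolymatroidal J) :
    ComponentwisePolymatroidal (mulIdeal I J) ∧
    ∀ k : ℕ, 1 ≤ k → ComponentwisePolymatroidal (powIdeal I k) := by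
  refine ⟨cp_mul hI hJ hcpI hcpJ, ?_⟩
  intro k hk
  induction k with
  | zero => omega
  | succ m ih =>
    by_cases hm : m = 0
    · subst hm
      have h1 : powIdeal I 1 = I := mulIdeal_univ hI
      rw [h1]
      exact hcpI
    · have h1 : 1 ≤ m := Nat.one_le_iff_ne_zero.2 hm
      have hcpm := ih h1
      obtain ⟨m', rfl⟩ : ∃ m', m = m' + 1 := ⟨m - 1, by omega⟩
      exact cp_mul (powIdeal_isMonomial hI m') hI hcpm hcpI
end

section
/- If I is x-tight in [0,m] and J is x-tight in [0,n] in K[x,y], then IJ is x-tight in [0,m+n]. -/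
lemma le_mon2 (p q : ℕ) (w : Mon 2) : (![p, q] : Mon 2) ≤ w ↔ p ≤ w 0 ∧ q ≤ w 1 := by
  constructor
  · intro h; exact ⟨h 0, h 1⟩
  · rintro ⟨h0, h1⟩ i
    fin_cases i <;> simpa

lemma ideal_upward {n : ℕ} {I : Set (Mon n)} (hI : IsMonomialIdeal I) {u w : Mon n}
    (hu : u ∈ I) (huw : u ≤ w) : w ∈ I := by
  have h := hI u hu (fun i => w i - u i)
  have hw : u + (fun i => w i - u i) = w := by
    funext i
    have hle : u i ≤ w i := huw i
    show u i + (w i - u i) = w i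
    omega
  rwa [hw] at h

lemma degree_lt {n : ℕ} {u v : Mon n} (h : u ≤ v) (hne : u ≠ v) : degree u < degree v := by
  have hex : ∃ i, u i < v i := by
    by_contra hc; push_neg at hc
    exact hne (funext fun i => le_antisymm (h i) (hc i))
  obtain ⟨i, hi⟩ := hex
  exact Finset.sum_lt_sum (fun j _ => h j) ⟨i, Finset.mem_univ i, hi⟩

lemma exists_minGen {n : ℕ} {I : Set (Mon n)} {w : Mon n} (hw : w ∈ I) :
    ∃ u ∈ minGens I, u ≤ w := by
  suffices h : ∀ d w, w ∈ I → degree w ≤ d → ∃ u ∈ minGens I, u ≤ w from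
    h (degree w) w hw le_rfl
  intro d
  induction d with
  | zero =>
    intro w hw hd
    refine ⟨w, ⟨hw, fun v hv hvw => ?_⟩, le_rfl⟩
    by_contra hne
    have := degree_lt hvw hne
    omega
  | succ d ih =>
    intro w hw hd
    by_cases hmin : ∀ v ∈ I, v ≤ w → v = w
    · exact ⟨w, ⟨hw, hmin⟩, le_rfl⟩
    · push_neg at hmin
      obtain ⟨v, hv, hvw, hne⟩ := hmin
      have hlt := degree_lt hvw hne
      obtain ⟨u, hu, huv⟩ := ih v hv (by omega)
      exact ⟨u, hu, le_trans huv hvw⟩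

/-- if `I` is `x`-tight in `[0,m]` and `J` is `x`-tight in `[0,n]`, then
`I·J` is `x`-tight in `[0,m+n]`. -/
theorem stmt_13 (I J : Set (Mon 2)) (hI : IsMonomialIdeal I) (hJ : IsMonomialIdeal J)
    (m n : ℕ) (hxI : xTight I m) (hxJ : xTight J n) :
    xTight (mulIdeal I J) (m + n) := by
  obtain ⟨b, hbmono, _, hb0, hminI⟩ := hxI
  obtain ⟨b', hbmono', _, hb0', hminJ⟩ := hxJ
  -- membership characterizations
  have memI : ∀ w : Mon 2, w ∈ I ↔ ∃ i ≤ m, m - i ≤ w 0 ∧ b i ≤ w 1 := by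
    intro w
    constructor
    · intro hw
      obtain ⟨u, hu, huw⟩ := exists_minGen hw
      rw [hminI] at hu
      obtain ⟨i, hi, rfl⟩ := hu
      rw [le_mon2] at huw
      exact ⟨i, hi, huw⟩
    · rintro ⟨i, hi, h0, h1⟩
      have hgen : (![m - i, b i] : Mon 2) ∈ minGens I := by
        rw [hminI]; exact ⟨i, hi, rfl⟩
      exact ideal_upward hI hgen.1 ((le_mon2 _ _ _).2 ⟨h0, h1⟩)
  have memJ : ∀ w : Mon 2, w ∈ J ↔ ∃ j ≤ n, n - j ≤ w 0 ∧ b' j ≤ w 1 := by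
    intro w
    constructor
    · intro hw
      obtain ⟨u, hu, huw⟩ := exists_minGen hw
      rw [hminJ] at hu
      obtain ⟨j, hj, rfl⟩ := hu
      rw [le_mon2] at huw
      exact ⟨j, hj, huw⟩
    · rintro ⟨j, hj, h0, h1⟩
      have hgen : (![n - j, b' j] : Mon 2) ∈ minGens J := by
        rw [hminJ]; exact ⟨j, hj, rfl⟩
      exact ideal_upward hJ hgen.1 ((le_mon2 _ _ _).2 ⟨h0, h1⟩)
  have memMul : ∀ w : Mon 2, w ∈ mulIdeal I J ↔
      ∃ i ≤ m, ∃ j ≤ n, (m - i) + (n - j) ≤ w 0 ∧ b i + b' j ≤ w 1 := by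
    intro w
    constructor
    · rintro ⟨u, hu, v, hv, rfl⟩
      obtain ⟨i, hi, hu0, hu1⟩ := (memI u).1 hu
      obtain ⟨j, hj, hv0, hv1⟩ := (memJ v).1 hv
      exact ⟨i, hi, j, hj, by simpa using add_le_add hu0 hv0,
        by simpa using add_le_add hu1 hv1⟩
    · rintro ⟨i, hi, j, hj, h0, h1⟩
      refine ⟨![m - i, b i], (memI _).2 ⟨i, hi, by simp, by simp⟩,
        fun k => w k - (![m - i, b i] : Mon 2) k, (memJ _).2 ⟨j, hj, ?_, ?_⟩, ?_⟩
      · simp only [Matrix.cons_val_zero]; omega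
      · simp only [Matrix.cons_val_one, Matrix.head_cons, Matrix.cons_val_zero]; omega
      · funext k
        fin_cases k <;> simp <;> omega
  -- the y-exponents of the generators of the product
  set c : ℕ → ℕ := fun k =>
    sInf {t | ∃ i j, i ≤ m ∧ j ≤ n ∧ i + j = k ∧ t = b i + b' j} with hc
  have cspec : ∀ k ≤ m + n, ∃ i j, i ≤ m ∧ j ≤ n ∧ i + j = k ∧ c k = b i + b' j := by
    intro k hk
    have hne : {t | ∃ i j, i ≤ m ∧ j ≤ n ∧ i + j = k ∧ t = b i + b' j}.Nonempty := by
      rcases le_total k m with h | h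
      · exact ⟨b k + b' 0, k, 0, h, by omega, by omega, rfl⟩
      · exact ⟨b m + b' (k - m), m, k - m, le_rfl, by omega, by omega, rfl⟩
    exact Nat.sInf_mem hne
  have cle : ∀ i j, i ≤ m → j ≤ n → c (i + j) ≤ b i + b' j := fun i j hi hj =>
    Nat.sInf_le ⟨i, j, hi, hj, rfl, rfl⟩
  have cstep : ∀ k, k < m + n → c k < c (k + 1) := by
    intro k hk
    obtain ⟨i, j, hi, hj, hij, hck⟩ := cspec (k + 1) (by omega)
    rcases Nat.eq_zero_or_pos i with rfl | hipos
    · have hj0 : 0 < j := by omega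
      have h1 : c k ≤ b 0 + b' (j - 1) := by
        have := cle 0 (j - 1) (by omega) (by omega)
        simpa [show 0 + (j - 1) = k by omega] using this
      have h2 : b' (j - 1) < b' j := (hbmono' (j - 1) j (by omega) hj (by omega)).2
      omega
    · have h1 : c k ≤ b (i - 1) + b' j := by
        have := cle (i - 1) j (by omega) hj
        simpa [show i - 1 + j = k by omega] using this
      have h2 : b (i - 1) < b i := (hbmono (i - 1) i (by omega) hi (by omega)).2
      omega
  have cmono : ∀ l, l ≤ m + n → ∀ k, k < l → c k < c l := by
    intro l
    induction l with
    | zero => omega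
    | succ l ih =>
      intro hl k hk
      have hstep : c l < c (l + 1) := cstep l (by omega)
      rcases Nat.lt_or_ge k l with h | h
      · exact lt_trans (ih (by omega) k h) hstep
      · have : k = l := by omega
        subst this; exact hstep
  have c0 : c 0 = 0 := by
    obtain ⟨i, j, hi, hj, hij, hck⟩ := cspec 0 (by omega)
    have : i = 0 ∧ j = 0 := by omega
    rw [hck, this.1, this.2, hb0, hb0']
  have memMul' : ∀ w : Mon 2, w ∈ mulIdeal I J ↔
      ∃ k ≤ m + n, m + n - k ≤ w 0 ∧ c k ≤ w 1 := by
    intro w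
    rw [memMul]
    constructor
    · rintro ⟨i, hi, j, hj, h0, h1⟩
      refine ⟨i + j, by omega, by omega, le_trans (cle i j hi hj) h1⟩
    · rintro ⟨k, hk, h0, h1⟩
      obtain ⟨i, j, hi, hj, hij, hck⟩ := cspec k hk
      exact ⟨i, hi, j, hj, by omega, by omega⟩
  -- the generators of the product are in minGens
  have hgenmem : ∀ k ≤ m + n, (![m + n - k, c k] : Mon 2) ∈ minGens (mulIdeal I J) := by
    intro k hk
    constructor
    · exact (memMul' _).2 ⟨k, hk, by simp, by simp⟩
    · intro v hv hle
      obtain ⟨k', hk', h0, h1⟩ := (memMul' v).1 hv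
      have hv0 : v 0 ≤ m + n - k := by simpa using hle 0
      have hv1 : v 1 ≤ c k := by simpa using hle 1
      have hkk' : k ≤ k' := by omega
      have hk'k : k' ≤ k := by
        by_contra hlt
        have := cmono k' hk' k (by omega)
        omega
      have hkeq : k' = k := le_antisymm hk'k hkk'
      subst hkeq
      exact le_antisymm hle ((le_mon2 _ _ _).2 ⟨h0, h1⟩)
  refine ⟨c, ?_, by simp, c0, ?_⟩
  · intro i k hi hk hik
    exact ⟨by show m + n - k < m + n - i; omega, cmono k hk i hik⟩
  · ext u
    constructor
    · intro hu
      obtain ⟨k, hk, h0, h1⟩ := (memMul' u).1 hu.1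
      have hle : (![m + n - k, c k] : Mon 2) ≤ u := (le_mon2 _ _ _).2 ⟨h0, h1⟩
      exact ⟨k, hk, (hu.2 _ (hgenmem k hk).1 hle).symm⟩
    · rintro ⟨k, hk, rfl⟩
      exact hgenmem k hk
end

section
/- Let J = I_{(d; a_1,...,a_n)} and L = I_{(d; b_1,...,b_n)} be Veronese type ideals of the same degree d with J ⊆ L. Then J can be extended by linear quotients to L. -/
namespace S15
variable {n : ℕ}

lemma degree_mono {u v : Mon n} (h : u ≤ v) : degree u ≤ degree v :=
  Finset.sum_le_sum fun i _ => h i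

lemma eq_of_le_of_degree {u v : Mon n} (h : u ≤ v) (hd : degree v ≤ degree u) : u = v := by
  by_contra hne
  have hex : ∃ i, u i < v i := by
    by_contra hc; push_neg at hc
    exact hne (funext fun i => le_antisymm (h i) (hc i))
  obtain ⟨i, hi⟩ := hex
  have : degree u < degree v :=
    Finset.sum_lt_sum (fun j _ => h j) ⟨i, Finset.mem_univ i, hi⟩
  omega

lemma minGens_veronese (d : ℕ) (c : Fin n → ℕ) :
    minGens (veronese n d c) = {u | degree u = d ∧ ∀ i, u i ≤ c i} := by
  ext u
  constructor
  · rintro ⟨⟨u', hdeg, hcap, hle⟩, hmin⟩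
    have : u' = u := hmin u' ⟨u', hdeg, hcap, le_refl u'⟩ hle
    subst this; exact ⟨hdeg, hcap⟩
  · rintro ⟨hdeg, hcap⟩
    refine ⟨⟨u, hdeg, hcap, le_refl u⟩, ?_⟩
    rintro v ⟨u', hd', hc', hle'⟩ hvu
    have h1 : degree v ≤ d := hdeg ▸ degree_mono hvu
    have h2 : u' = v := eq_of_le_of_degree hle' (by rw [hd']; exact h1)
    subst h2
    exact eq_of_le_of_degree hvu (by rw [hdeg, ← hd'])

/-- the "distance" of `u` above the cap vector `a` -/
def dlt (a u : Mon n) : ℕ := ∑ i, (u i - a i)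

noncomputable def keyv (a u : Mon n) : ℕ ×ₗ (Lex (Mon n))ᵒᵈ :=
  toLex (dlt a u, OrderDual.toDual (toLex u))

lemma keyv_lt_iff {a u v : Mon n} :
    keyv a u < keyv a v ↔ dlt a u < dlt a v ∨ (dlt a u = dlt a v ∧ toLex v < toLex u) := by
  unfold keyv
  rw [Prod.Lex.lt_iff]
  simp

lemma keyv_inj {a u v : Mon n} (h : keyv a u = keyv a v) : u = v := by
  unfold keyv at h
  have h2 := congrArg (fun p => (ofLex p).2) h
  simpa using h2

lemma sum_split2 (k t : Fin n) (h : k ≠ t) (f : Fin n → ℕ) :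
    ∑ i, f i = f k + f t + ∑ i ∈ (Finset.univ.erase k).erase t, f i := by
  rw [← Finset.sum_erase_add _ _ (Finset.mem_univ k),
    ← Finset.sum_erase_add (Finset.univ.erase k) _
      (Finset.mem_erase.mpr ⟨h.symm, Finset.mem_univ t⟩)]
  ring

/-- the exchange monomial: add 1 at `k`, subtract 1 at `t` -/
def mv (v : Mon n) (k t : Fin n) : Mon n :=
  fun i => if i = k then v i + 1 else if i = t then v i - 1 else v i

lemma mv_eq_of_ne {v : Mon n} {k t i : Fin n} (h1 : i ≠ k) (h2 : i ≠ t) :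
    mv v k t i = v i := by simp [mv, h1, h2]

lemma mv_k {v : Mon n} {k t : Fin n} : mv v k t k = v k + 1 := by simp [mv]

lemma mv_t {v : Mon n} {k t : Fin n} (h : k ≠ t) : mv v k t t = v t - 1 := by
  simp [mv, Ne.symm h]

lemma degree_mv {v : Mon n} {k t : Fin n} (h : k ≠ t) (hv : 1 ≤ v t) :
    degree (mv v k t) = degree v := by
  unfold degree
  rw [sum_split2 k t h (mv v k t), sum_split2 k t h v, mv_k, mv_t h]
  have : ∑ i ∈ (Finset.univ.erase k).erase t, mv v k t i
      = ∑ i ∈ (Finset.univ.erase k).erase t, v i := by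
    refine Finset.sum_congr rfl fun i hi => ?_
    simp only [Finset.mem_erase] at hi
    exact mv_eq_of_ne hi.2.1 hi.1
  omega

lemma dlt_mv_cong {a v : Mon n} {k t : Fin n} (h : k ≠ t) :
    ∑ i ∈ (Finset.univ.erase k).erase t, (mv v k t i - a i)
      = ∑ i ∈ (Finset.univ.erase k).erase t, (v i - a i) := by
  refine Finset.sum_congr rfl fun i hi => ?_
  simp only [Finset.mem_erase] at hi
  rw [mv_eq_of_ne hi.2.1 hi.1]

lemma dlt_mv_decr {a v : Mon n} {k t : Fin n} (hk : v k < a k) (ht : a t < v t) :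
    dlt a (mv v k t) + 1 = dlt a v := by
  have h : k ≠ t := by rintro rfl; omega
  unfold dlt
  rw [sum_split2 k t h (fun i => mv v k t i - a i),
    sum_split2 k t h (fun i => v i - a i)]
  rw [mv_k, mv_t h, dlt_mv_cong h]
  omega

lemma dlt_mv_eq {a v : Mon n} {k t : Fin n} (h : k ≠ t) (hk : a k ≤ v k) (ht : a t < v t) :
    dlt a (mv v k t) = dlt a v := by
  unfold dlt
  rw [sum_split2 k t h (fun i => mv v k t i - a i),
    sum_split2 k t h (fun i => v i - a i)]
  rw [mv_k, mv_t h, dlt_mv_cong h]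
  omega

lemma exists_k {a u v : Mon n} (hdeg : degree u = degree v) (hlt : dlt a u < dlt a v) :
    ∃ k, v k < u k ∧ v k < a k := by
  by_contra h; push_neg at h
  have hs : ∑ i, (u i - v i) + degree v = ∑ i, (v i - u i) + degree u := by
    unfold degree
    rw [← Finset.sum_add_distrib, ← Finset.sum_add_distrib]
    exact Finset.sum_congr rfl fun i _ => by omega
  have key : ∀ i ∈ Finset.univ, (v i - a i) + (u i - v i) ≤ (u i - a i) + (v i - u i) := by
    intro i _
    rcases lt_or_ge (v i) (u i) with hlt' | hle'
    · have := h i hlt'; omega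
    · omega
  have hsum := Finset.sum_le_sum key
  rw [Finset.sum_add_distrib, Finset.sum_add_distrib] at hsum
  unfold dlt at hlt
  omega

lemma exists_t {a u v : Mon n} (hdeg : degree u = degree v) (hdlt : dlt a u = dlt a v)
    (p : Fin n) (hagree : ∀ j, j < p → v j = u j) (hp : v p < u p) (hpa : a p ≤ v p) :
    ∃ t, p < t ∧ a t < v t := by
  by_contra h; push_neg at h
  have : dlt a v < dlt a u := by
    refine Finset.sum_lt_sum (fun i _ => ?_) ⟨p, Finset.mem_univ p, by omega⟩
    rcases lt_trichotomy i p with h1 | rfl | h2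
    · rw [hagree i h1]
    · omega
    · have := h i h2; omega
  omega

def eVec (k : Fin n) : Mon n := fun i => if i = k then 1 else 0

lemma mv_le {v : Mon n} {k t : Fin n} (h : k ≠ t) : mv v k t ≤ eVec k + v := by
  intro i
  by_cases h1 : i = k
  · rw [h1, mv_k]; simp only [eVec, Pi.add_apply, if_pos]; omega
  · by_cases h2 : i = t
    · rw [h2, mv_t h]; simp only [eVec, Pi.add_apply, if_neg (Ne.symm h)]; omega
    · rw [mv_eq_of_ne h1 h2]; simp [eVec, h1]

/-- The key exchange step. -/
lemma step {d : ℕ} {a b v u w : Mon n}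
    (hvd : degree v = d) (hvb : ∀ i, v i ≤ b i) (hvA : ¬ ∀ i, v i ≤ a i)
    (hud : degree u = d) (hub : ∀ i, u i ≤ b i)
    (hprev : (∀ i, u i ≤ a i) ∨ keyv a u < keyv a v)
    (hle : u ≤ w + v) :
    ∃ k, 1 ≤ w k ∧ ∃ v', (degree v' = d ∧ (∀ i, v' i ≤ b i) ∧
        ((∀ i, v' i ≤ a i) ∨ keyv a v' < keyv a v)) ∧ v' ≤ eVec k + v := by
  -- a violated coordinate of v
  push_neg at hvA
  obtain ⟨t0, ht0⟩ := hvA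
  have hdv : 1 ≤ dlt a v := by
    have h0 : v t0 - a t0 ≤ dlt a v :=
      Finset.single_le_sum (f := fun i => v i - a i) (fun i _ => Nat.zero_le _)
        (Finset.mem_univ t0)
    omega
  have hdeg : degree u = degree v := by rw [hud, hvd]
  have hlt : dlt a u < dlt a v ∨ (dlt a u = dlt a v ∧ toLex v < toLex u) := by
    rcases hprev with hA | hkey
    · left
      have : dlt a u = 0 := Finset.sum_eq_zero fun i _ => by have := hA i; omega
      omega
    · exact keyv_lt_iff.mp hkey
  rcases hlt with hlt | ⟨hdlt, hlex⟩
  · -- case 1: strict dlt decrease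
    obtain ⟨k, hk1, hk2⟩ := exists_k hdeg hlt
    have hkt : k ≠ t0 := by rintro rfl; omega
    refine ⟨k, by have := hle k; simp only [Pi.add_apply] at this; omega, mv v k t0, ⟨?_, ?_, ?_⟩, mv_le hkt⟩
    · rw [degree_mv hkt (by omega), hvd]
    · intro i
      by_cases h1 : i = k
      · rw [h1, mv_k]; have := hub k; omega
      · by_cases h2 : i = t0
        · rw [h2, mv_t hkt]; have := hvb t0; omega
        · rw [mv_eq_of_ne h1 h2]; exact hvb i
    · by_cases hA : ∀ i, mv v k t0 i ≤ a i
      · exact Or.inl hA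
      · refine Or.inr (keyv_lt_iff.mpr (Or.inl ?_))
        have := dlt_mv_decr hk2 ht0
        omega
  · -- case 2: equal dlt, lex
    obtain ⟨p, hagree, hp⟩ : ∃ p, (∀ j, j < p → v j = u j) ∧ v p < u p := hlex
    have hwp : 1 ≤ w p := by have := hle p; simp only [Pi.add_apply] at this; omega
    by_cases hpa : v p < a p
    · -- dlt-decreasing exchange at p, t0
      have hpt : p ≠ t0 := by rintro rfl; omega
      refine ⟨p, hwp, mv v p t0, ⟨?_, ?_, ?_⟩, mv_le hpt⟩
      · rw [degree_mv hpt (by omega), hvd]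
      · intro i
        by_cases h1 : i = p
        · rw [h1, mv_k]; have := hub p; omega
        · by_cases h2 : i = t0
          · rw [h2, mv_t hpt]; have := hvb t0; omega
          · rw [mv_eq_of_ne h1 h2]; exact hvb i
      · by_cases hA : ∀ i, mv v p t0 i ≤ a i
        · exact Or.inl hA
        · refine Or.inr (keyv_lt_iff.mpr (Or.inl ?_))
          have := dlt_mv_decr hpa ht0
          omega
    · -- dlt-preserving, lex-increasing exchange at p, t with t > p
      push_neg at hpa
      obtain ⟨t, hpt', hta⟩ := exists_t hdeg hdlt p hagree hp hpa
      have hpt : p ≠ t := ne_of_lt hpt'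
      refine ⟨p, hwp, mv v p t, ⟨?_, ?_, ?_⟩, mv_le hpt⟩
      · rw [degree_mv hpt (by omega), hvd]
      · intro i
        by_cases h1 : i = p
        · rw [h1, mv_k]; have := hub p; omega
        · by_cases h2 : i = t
          · rw [h2, mv_t hpt]; have := hvb t; omega
          · rw [mv_eq_of_ne h1 h2]; exact hvb i
      · refine Or.inr (keyv_lt_iff.mpr (Or.inr ⟨dlt_mv_eq hpt hpa hta, ?_⟩))
        refine ⟨p, fun j hj => ?_, ?_⟩
        · show v j = mv v p t j
          rw [mv_eq_of_ne (ne_of_lt hj) (ne_of_lt (hj.trans hpt'))]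
        · show v p < mv v p t p
          rw [mv_k]; omega

end S15

/-- if `J = I_{(d;a)} ⊆ L = I_{(d;b)}` are Veronese type ideals of the
same degree, then `J` can be extended by linear quotients to `L`. -/
theorem stmt_15 (n d : ℕ) (a b : Fin n → ℕ) (hd : 0 < d)
    (ha : ∀ i, 0 < a i) (hb : ∀ i, 0 < b i)
    (hsub : veronese n d a ⊆ veronese n d b) :
    ExtendsByLinearQuotients (veronese n d a) (veronese n d b) := by
  classical
  letI : WellFoundedLT (Fin n) := inferInstance
  letI : LinearOrder (Lex (Mon n)) := Pi.Lex.linearOrder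
  letI : LinearOrder (ℕ ×ₗ (Lex (Mon n))ᵒᵈ) := inferInstance
  have hminA := S15.minGens_veronese (n := n) d a
  have hminB := S15.minGens_veronese (n := n) d b
  have hAB : ∀ u : Mon n, (degree u = d ∧ ∀ i, u i ≤ a i) →
      (degree u = d ∧ ∀ i, u i ≤ b i) := by
    rintro u ⟨hdeg, hcap⟩
    obtain ⟨u', hd', hc', hle'⟩ := hsub ⟨u, hdeg, hcap, le_refl u⟩
    have heq : u' = u := S15.eq_of_le_of_degree hle' (by rw [hd', hdeg])
    subst heq
    exact ⟨hdeg, hc'⟩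
  set sF : Set (Mon n) :=
    {u | (degree u = d ∧ ∀ i, u i ≤ b i) ∧ ¬(degree u = d ∧ ∀ i, u i ≤ a i)} with hsF
  have hfin : sF.Finite := by
    have hpi : (Set.univ.pi fun i : Fin n => Set.Iic (b i)).Finite :=
      Set.Finite.pi fun i => Set.finite_Iic (b i)
    refine hpi.subset ?_
    rintro u ⟨⟨_, hcap⟩, _⟩
    exact fun i _ => hcap i
  set r : Mon n → Mon n → Prop := fun u v => S15.keyv a u ≤ S15.keyv a v with hr
  haveI : DecidableRel r := Classical.decRel r
  haveI : IsTrans (Mon n) r := ⟨fun u v w h1 h2 => le_trans h1 h2⟩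
  haveI : Std.Antisymm r := ⟨fun u v h1 h2 => S15.keyv_inj (le_antisymm h1 h2)⟩
  haveI : Std.Total r := ⟨fun u v => by simp only [hr]; exact le_total (S15.keyv a u) (S15.keyv a v)⟩
  set L : List (Mon n) := Finset.sort hfin.toFinset r with hL
  have hnodup : L.Nodup := Finset.sort_nodup _ r
  have hmemL : ∀ u, u ∈ L ↔ u ∈ sF := fun u => (Finset.mem_sort r).trans hfin.mem_toFinset
  have hsorted : List.Pairwise r L := Finset.pairwise_sort _ r
  refine ⟨hsub, by rw [hminA, hminB]; exact fun u hu => hAB u hu, L, hnodup, ?_, ?_⟩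
  · intro u
    rw [hminA, hminB, hmemL u]
    exact Iff.rfl
  · intro i
    set v := L.get i with hvdef
    have hvL : v ∈ L := List.get_mem L _
    have hvF : v ∈ sF := (hmemL v).1 hvL
    obtain ⟨⟨hvd, hvb⟩, hvA⟩ := hvF
    have hvA' : ¬ ∀ j, v j ≤ a j := fun h => hvA ⟨hvd, h⟩
    have htake : ∀ u, u ∈ L.take i.1 → u ∈ sF ∧ S15.keyv a u < S15.keyv a v := by
      intro u hu
      rw [List.mem_take_iff_getElem] at hu
      obtain ⟨j, hj, hju⟩ := hu
      have hjL : j < L.length := hj.trans_le (min_le_right _ _)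
      have hji : j < i.1 := hj.trans_le (min_le_left _ _)
      have hrel : r u v := by
        have h2 := List.pairwise_iff_getElem.mp hsorted j i.1 hjL i.2 hji
        rw [hju] at h2
        rw [hvdef, List.get_eq_getElem]
        exact h2
      have hne : u ≠ v := by
        intro h
        rw [← hju, hvdef, List.get_eq_getElem] at h
        have := (List.Nodup.getElem_inj_iff hnodup).1 h
        omega
      have huL : u ∈ L := by rw [← hju]; exact List.getElem_mem _
      exact ⟨(hmemL u).1 huL,
        lt_of_le_of_ne hrel (fun h => hne (S15.keyv_inj h))⟩
    have hcov : ∀ u, u ∈ sF → S15.keyv a u < S15.keyv a v → u ∈ L.take i.1 := by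
      intro u huF hkey
      have huL : u ∈ L := (hmemL u).2 huF
      obtain ⟨j, hjL, hju⟩ := List.mem_iff_getElem.mp huL
      rw [List.mem_take_iff_getElem]
      refine ⟨j, ?_, hju⟩
      have hji : j < i.1 := by
        rcases lt_trichotomy j i.1 with h | h | h
        · exact h
        · exfalso
          have huv : u = v := by
            rw [← hju, hvdef, List.get_eq_getElem]
            congr 1
          rw [huv] at hkey; exact lt_irrefl _ hkey
        · exfalso
          have hrel : r v u := by
            have h2 := List.pairwise_iff_getElem.mp hsorted i.1 j i.2 hjL h
            rw [hju] at h2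
            rw [hvdef, List.get_eq_getElem]
            exact h2
          simp only [hr] at hrel
          exact absurd hkey (not_lt.mpr hrel)
      exact lt_min_iff.mpr ⟨hji, hjL⟩
    refine ⟨{k | S15.eVec k + v ∈
      genBy (minGens (veronese n d a) ∪ {u | u ∈ L.take i.1})}, ?_⟩
    intro w
    constructor
    · rintro ⟨g, hg, hgle⟩
      have hgB : degree g = d ∧ ∀ i, g i ≤ b i := by
        rcases hg with hg | hg
        · exact hAB g (by rwa [hminA] at hg)
        · exact ((htake g hg).1).1
      have hprev : (∀ i, g i ≤ a i) ∨ S15.keyv a g < S15.keyv a v := by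
        rcases hg with hg | hg
        · rw [hminA] at hg; exact Or.inl hg.2
        · exact Or.inr (htake g hg).2
      obtain ⟨k, hwk, v', ⟨hv'd, hv'b, hv'c⟩, hv'le⟩ :=
        S15.step hvd hvb hvA' hgB.1 hgB.2 hprev hgle
      refine ⟨k, ?_, hwk⟩
      show S15.eVec k + v ∈ genBy _
      refine ⟨v', ?_, hv'le⟩
      by_cases hA : ∀ j, v' j ≤ a j
      · exact Or.inl (by rw [hminA]; exact ⟨hv'd, hA⟩)
      · rcases hv'c with hc | hc
        · exact absurd hc hA
        · exact Or.inr (hcov v' ⟨⟨hv'd, hv'b⟩, fun h => hA h.2⟩ hc)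
    · rintro ⟨k, hkS, hwk⟩
      obtain ⟨g, hg, hgle⟩ := hkS
      refine ⟨g, hg, ?_⟩
      intro j
      have h1 := hgle j
      simp only [Pi.add_apply, S15.eVec] at h1 ⊢
      by_cases h : j = k
      · subst h
        rw [if_pos rfl] at h1
        omega
      · rw [if_neg h] at h1
        omega
end

section
/- If a polymatroidal ideal I in K[x_1,...,x_n] satisfies the strong exchange property, then I = u·I_{(d; a_1,...,a_n)} for some Veronese type ideal I_{(d; a_1,...,a_n)}, where u is the greatest common divisor of the minimal generators of I. -/
namespace Stmt17Aux

lemma degree_mono {n : ℕ} {u v : Mon n} (h : u ≤ v) : degree u ≤ degree v :=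
  Finset.sum_le_sum fun i _ => h i

lemma eq_of_le_of_degree_le {n : ℕ} {u v : Mon n} (h : u ≤ v)
    (hd : degree v ≤ degree u) : u = v := by
  funext i
  by_contra hne
  have h1 : u i < v i := lt_of_le_of_ne (h i) hne
  have : degree u < degree v :=
    Finset.sum_lt_sum (fun j _ => h j) ⟨i, Finset.mem_univ i, h1⟩
  omega

lemma exists_minGen_le {n : ℕ} {I : Set (Mon n)} :
    ∀ N, ∀ x ∈ I, degree x ≤ N → ∃ g ∈ minGens I, g ≤ x := by
  intro N
  induction N using Nat.strong_induction_on with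
  | _ N ih =>
    intro x hx hd
    by_cases hmin : ∀ v ∈ I, v ≤ x → v = x
    · exact ⟨x, ⟨hx, hmin⟩, le_refl x⟩
    · push_neg at hmin
      obtain ⟨v, hvI, hvx, hne⟩ := hmin
      have hlt : degree v < degree x := by
        rcases lt_or_eq_of_le (degree_mono hvx) with h | h
        · exact h
        · exact absurd (eq_of_le_of_degree_le hvx h.ge) hne
      obtain ⟨g, hg, hgv⟩ := ih (degree v) (by omega) v hvI le_rfl
      exact ⟨g, hg, le_trans hgv hvx⟩

lemma degree_exch {n : ℕ} {v : Mon n} {i j : Fin n} (hij : i ≠ j) (hv : 1 ≤ v i) :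
    degree (exch v i j) = degree v := by
  have key : ∀ k, exch v i j k + (if k = i then 1 else 0)
      = v k + (if k = j then 1 else 0) := by
    intro k
    rcases eq_or_ne k i with rfl | h1
    · simp [exch, hij]
      omega
    · rcases eq_or_ne k j with rfl | h2
      · simp [exch, h1]
      · simp [exch, h1, h2]
  have hsum : (∑ k, (exch v i j k + (if k = i then 1 else 0)))
      = ∑ k, (v k + (if k = j then 1 else 0)) :=
    Finset.sum_congr rfl fun k _ => key k
  simp only [Finset.sum_add_distrib, Finset.sum_ite_eq' Finset.univ,
    Finset.mem_univ, if_true] at hsum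
  unfold degree
  omega

lemma lemA {n : ℕ} {I : Set (Mon n)} {D : ℕ}
    (hdeg : ∀ g ∈ minGens I, degree g = D)
    (hmem : ∀ x ∈ I, degree x = D → x ∈ minGens I)
    (hse : StrongExchange I) :
    ∀ N, ∀ v ∈ minGens I, ∀ w ∈ minGens I, ∀ i : Fin n, v i ≤ w i + N →
      ∃ v' ∈ minGens I, v' i ≤ w i ∧ ∀ k, k ≠ i → v k ≤ v' k := by
  intro N
  induction N with
  | zero =>
    intro v hv w hw i h
    exact ⟨v, hv, by omega, fun k _ => le_rfl⟩
  | succ N ih =>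
    intro v hv w hw i h
    by_cases hle : v i ≤ w i
    · exact ⟨v, hv, hle, fun k _ => le_rfl⟩
    · push_neg at hle
      have hdv : degree v = D := hdeg v hv
      have hdw : degree w = D := hdeg w hw
      have hj : ∃ j, v j < w j := by
        by_contra hc
        push_neg at hc
        have : degree w < degree v :=
          Finset.sum_lt_sum (fun j _ => hc j) ⟨i, Finset.mem_univ i, hle⟩
        omega
      obtain ⟨j, hj⟩ := hj
      have hij : i ≠ j := by
        intro h'; subst h'; omega
      have hex : exch v i j ∈ I := hse v hv w hw i j hle hj
      have hvi1 : 1 ≤ v i := by omega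
      have hdeg2 : degree (exch v i j) = D := by
        rw [degree_exch hij hvi1, hdv]
      have hmg : exch v i j ∈ minGens I := hmem _ hex hdeg2
      have hile : exch v i j i ≤ w i + N := by
        simp [exch]
        omega
      obtain ⟨v', hv', hvi', hmono⟩ := ih (exch v i j) hmg w hw i hile
      refine ⟨v', hv', hvi', fun k hk => le_trans ?_ (hmono k hk)⟩
      simp [exch, hk]
      split <;> omega

lemma core {n : ℕ} {I : Set (Mon n)} {D : ℕ} {u : Mon n} {a : Fin n → ℕ}
    (hdeg : ∀ g ∈ minGens I, degree g = D)
    (hmem : ∀ x ∈ I, degree x = D → x ∈ minGens I)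
    (hse : StrongExchange I)
    (hlb : ∀ v ∈ minGens I, u ≤ v)
    (hmin : ∀ i, ∃ w ∈ minGens I, w i = u i)
    (hA : ∀ i, ∃ v ∈ minGens I, v i = u i + a i) :
    ∀ t, ∀ g ∈ minGens I, ∀ m : Mon n, degree (u + m) = D → (∀ i, m i ≤ a i) →
      (∑ i, (g i - (u i + m i))) ≤ t → u + m ∈ I := by
  intro t
  induction t using Nat.strong_induction_on with
  | _ t ih =>
    intro g hg m hdm hma hsum
    by_cases hcase : ∀ i, g i ≤ u i + m i
    · have hle2 : g ≤ u + m := fun i => hcase i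
      have : g = u + m := by
        apply eq_of_le_of_degree_le hle2
        rw [hdm, hdeg g hg]
      rw [← this]
      exact hg.1
    · push_neg at hcase
      obtain ⟨i, hi⟩ := hcase
      have hj : ∃ j, g j < u j + m j := by
        by_contra hc
        push_neg at hc
        have h1 : degree (u + m) < degree g :=
          Finset.sum_lt_sum (fun j _ => hc j) ⟨i, Finset.mem_univ i, hi⟩
        rw [hdm, hdeg g hg] at h1
        omega
      obtain ⟨j, hj⟩ := hj
      have hij : i ≠ j := by
        intro h'; subst h'; omega
      obtain ⟨w, hw, hwi⟩ := hmin i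
      obtain ⟨v, hv, hvj⟩ := hA j
      obtain ⟨v', hv', hvi', hmono⟩ :=
        lemA hdeg hmem hse (v i) v hv w hw i (by omega)
      have hvi2 : v' i < g i := by omega
      have hvj2 : g j < v' j := by
        have h1 : v j ≤ v' j := hmono j (Ne.symm hij)
        have h2 : m j ≤ a j := hma j
        omega
      have hex : exch g i j ∈ I := hse g hg v' hv' i j hvi2 hvj2
      have hgi1 : 1 ≤ g i := by omega
      have hdeg2 : degree (exch g i j) = D := by
        rw [degree_exch hij hgi1, hdeg g hg]
      have hmg : exch g i j ∈ minGens I := hmem _ hex hdeg2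
      have hlt : (∑ k, (exch g i j k - (u k + m k))) < ∑ k, (g k - (u k + m k)) := by
        apply Finset.sum_lt_sum
        · intro k _
          rcases eq_or_ne k i with rfl | hki
          · simp only [exch, if_pos, eq_self_iff_true, if_true]; omega
          · rcases eq_or_ne k j with rfl | hkj
            · simp only [exch, if_neg hki, eq_self_iff_true, if_true]; omega
            · simp only [exch, if_neg hki, if_neg hkj]; omega
        · refine ⟨i, Finset.mem_univ i, ?_⟩
          simp only [exch, if_pos, eq_self_iff_true, if_true]
          omega
      have ht : 1 ≤ t := by omega
      exact ih (t - 1) (by omega) (exch g i j) hmg m hdm hma (by omega)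

end Stmt17Aux

/-- a polymatroidal ideal with the strong exchange property equals
`u · I_{(d; a_1,...,a_n)}` where `u` is the gcd of its minimal generators. -/
theorem stmt_17 {n : ℕ} (I : Set (Mon n)) (hI : IsMonomialIdeal I)
    (hpoly : IsPolymatroidal I) (hse : StrongExchange I)
    (u : Mon n)
    (hlb : ∀ v ∈ minGens I, u ≤ v)
    (hglb : ∀ w : Mon n, (∀ v ∈ minGens I, w ≤ v) → w ≤ u) :
    ∃ (d : ℕ) (a : Fin n → ℕ), I = mulMon u (veronese n d a) := by
  classical
  by_cases hne : (minGens I).Nonempty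
  · obtain ⟨g0, hg0⟩ := hne
    obtain ⟨D, hD⟩ := hpoly.1
    have hdeg : ∀ g ∈ minGens I, degree g = D := hD
    have hmem : ∀ x ∈ I, degree x = D → x ∈ minGens I := by
      intro x hx hdx
      refine ⟨hx, fun v hv hvx => ?_⟩
      obtain ⟨g, hg, hgv⟩ := Stmt17Aux.exists_minGen_le (degree v) v hv le_rfl
      have hgx : g = x := Stmt17Aux.eq_of_le_of_degree_le (le_trans hgv hvx)
        (by rw [hdx, hdeg g hg])
      exact le_antisymm hvx (hgx ▸ hgv)
    have hmin : ∀ i, ∃ w ∈ minGens I, w i = u i := by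
      intro i
      set c := sInf ((fun v => v i) '' minGens I) with hc
      have hcmem : c ∈ (fun v => v i) '' minGens I :=
        Nat.sInf_mem (Set.Nonempty.image _ ⟨g0, hg0⟩)
      obtain ⟨w, hw, hwi⟩ := hcmem
      have h1 : u i ≤ c := hwi ▸ hlb w hw i
      have h2 : c ≤ u i := by
        have hle : Function.update u i c ≤ u := by
          apply hglb
          intro v hv k
          rcases eq_or_ne k i with rfl | hk
          · simp only [Function.update_self]
            exact Nat.sInf_le ⟨v, hv, rfl⟩
          · simp only [Function.update_of_ne hk]
            exact hlb v hv k
        have := hle i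
        simpa using this
      exact ⟨w, hw, hwi.trans (le_antisymm h2 h1)⟩
    set a : Fin n → ℕ := fun i => sSup ((fun v => v i - u i) '' minGens I) with ha
    have hbdd : ∀ i, BddAbove ((fun v => v i - u i) '' minGens I) := by
      intro i
      refine ⟨D, ?_⟩
      rintro t ⟨v, hv, rfl⟩
      have h1 : v i ≤ degree v := Finset.single_le_sum (f := fun k => v k)
        (fun k _ => Nat.zero_le _) (Finset.mem_univ i)
      rw [hdeg v hv] at h1
      show v i - u i ≤ D
      omega
    have hA : ∀ i, ∃ v ∈ minGens I, v i = u i + a i := by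
      intro i
      have hmem' : a i ∈ (fun v => v i - u i) '' minGens I :=
        Nat.sSup_mem (Set.Nonempty.image _ ⟨g0, hg0⟩) (hbdd i)
      obtain ⟨v, hv, hvi⟩ := hmem'
      have hvi' : v i - u i = a i := hvi
      have hle3 : u i ≤ v i := hlb v hv i
      refine ⟨v, hv, ?_⟩
      clear hvi
      omega
    have haub : ∀ i, ∀ v ∈ minGens I, v i ≤ u i + a i := by
      intro i v hv
      have h1 : v i - u i ≤ a i := le_csSup (hbdd i) ⟨v, hv, rfl⟩
      have h2 : u i ≤ v i := hlb v hv i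
      omega
    have hdu : degree u ≤ D := by
      rw [← hdeg g0 hg0]
      exact Stmt17Aux.degree_mono (hlb g0 hg0)
    refine ⟨D - degree u, a, Set.ext fun x => ⟨?_, ?_⟩⟩
    · intro hx
      obtain ⟨g, hg, hgx⟩ := Stmt17Aux.exists_minGen_le (degree x) x hx le_rfl
      have hug : u ≤ g := hlb g hg
      have hux : u ≤ x := le_trans hug hgx
      refine ⟨fun k => x k - u k, ?_, ?_⟩
      · refine ⟨fun k => g k - u k, ?_, ?_, ?_⟩
        · have hsum : (∑ k, (g k - u k)) + ∑ k, u k = ∑ k, g k := by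
            rw [← Finset.sum_add_distrib]
            exact Finset.sum_congr rfl fun k _ => by have h9 : u k ≤ g k := hug k; omega
          have hdg : degree g = D := hdeg g hg
          show (∑ k, (g k - u k)) = D - degree u
          have h2 : degree g = ∑ k, g k := rfl
          have h3 : degree u = ∑ k, u k := rfl
          omega
        · intro k
          have h1 := haub k g hg
          have h2 : u k ≤ g k := hug k
          show g k - u k ≤ a k
          omega
        · intro k
          have h1 : g k ≤ x k := hgx k
          have h2 : u k ≤ g k := hug k
          show g k - u k ≤ x k - u k
          omega
      · funext k
        have h1 : u k ≤ x k := hux k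
        show u k + (x k - u k) = x k
        omega
    · rintro ⟨w', ⟨m, hdm, hma, hmw⟩, rfl⟩
      have hdum : degree (u + m) = D := by
        have : degree (u + m) = degree u + degree m := by
          unfold degree
          rw [← Finset.sum_add_distrib]
          rfl
        rw [this, hdm]
        omega
      have hcore : u + m ∈ I :=
        Stmt17Aux.core hdeg hmem hse hlb hmin hA
          (∑ k, (g0 k - (u k + m k))) g0 hg0 m hdum hma le_rfl
      have := hI (u + m) hcore (fun k => w' k - m k)
      have heq : u + m + (fun k => w' k - m k) = u + w' := by
        funext k
        have h1 : m k ≤ w' k := hmw k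
        show u k + m k + (w' k - m k) = u k + w' k
        omega
      rw [heq] at this
      exact this
  · have hempty : I = ∅ := by
      ext x
      simp only [Set.mem_empty_iff_false, iff_false]
      intro hx
      obtain ⟨g, hg, _⟩ := Stmt17Aux.exists_minGen_le (degree x) x hx le_rfl
      exact hne ⟨g, hg⟩
    refine ⟨1, fun _ => 0, ?_⟩
    rw [hempty]
    ext x
    simp only [Set.mem_empty_iff_false, false_iff]
    rintro ⟨w', ⟨m, hdm, hma, _⟩, rfl⟩
    have : degree m = 0 := by
      unfold degree
      exact Finset.sum_eq_zero fun k _ => Nat.le_zero.mp (hma k)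
    omega
end

section
/- The ideal I = x_1^2·x_2·I_{(4;1,3,3)} in K[x_1,x_2,x_3] has the strong exchange property but is not an ideal of Veronese type; in particular, x_2^4x_3^3 ∈ I_{(7;3,4,3)} but x_2^4x_3^3 ∉ I, so I ≠ I_{(7;3,4,3)}. -/
abbrev Iset : Set (Mon 3) := mulMon (![2,1,0] : Mon 3) (veronese 3 4 ![1,3,3])

lemma memI (w : Mon 3) : w ∈ Iset ↔
    ∃ e0 e1 e2 : ℕ, e0 ≤ 1 ∧ e1 ≤ 3 ∧ e2 ≤ 3 ∧ e0 + e1 + e2 = 4 ∧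
      2 + e0 ≤ w 0 ∧ 1 + e1 ≤ w 1 ∧ e2 ≤ w 2 := by
  constructor
  · rintro ⟨v, ⟨u, hd, hua, huv⟩, rfl⟩
    have h0 := hua 0; have h1 := hua 1; have h2 := hua 2
    have g0 := huv 0; have g1 := huv 1; have g2 := huv 2
    simp [Matrix.cons_val_zero, Matrix.cons_val_one, Matrix.head_cons] at h0 h1 h2
    rw [degree, Fin.sum_univ_three] at hd
    refine ⟨u 0, u 1, u 2, h0, h1, h2, hd, ?_, ?_, ?_⟩ <;> simp <;>
      first
        | exact huv 0
        | exact huv 1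
        | exact huv 2
  · rintro ⟨e0, e1, e2, he0, he1, he2, hsum, h0, h1, h2⟩
    refine ⟨![w 0 - 2, w 1 - 1, w 2], ⟨![e0, e1, e2], ?_, ?_, ?_⟩, ?_⟩
    · rw [degree, Fin.sum_univ_three]; simp; omega
    · intro i; fin_cases i <;> simp <;> omega
    · intro i; fin_cases i <;> simp <;> omega
    · funext i; fin_cases i <;> simp <;> omega

lemma memMinGens (w : Mon 3) : w ∈ minGens Iset ↔
    2 ≤ w 0 ∧ w 0 ≤ 3 ∧ 1 ≤ w 1 ∧ w 1 ≤ 4 ∧ w 2 ≤ 3 ∧ w 0 + w 1 + w 2 = 7 := by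
  constructor
  · rintro ⟨hw, hmin⟩
    obtain ⟨e0, e1, e2, he0, he1, he2, hsum, h0, h1, h2⟩ := (memI w).1 hw
    have hv : (![2+e0, 1+e1, e2] : Mon 3) ∈ Iset := by
      rw [memI]
      exact ⟨e0, e1, e2, he0, he1, he2, hsum, by simp, by simp, by simp⟩
    have hle : (![2+e0, 1+e1, e2] : Mon 3) ≤ w := by
      intro i; fin_cases i <;> simp <;> omega
    have heq := hmin _ hv hle
    have q0 := congrFun heq 0; have q1 := congrFun heq 1; have q2 := congrFun heq 2
    simp at q0 q1 q2
    omega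
  · rintro ⟨h0, h0', h1, h1', h2, hsum⟩
    refine ⟨(memI w).2 ⟨w 0 - 2, w 1 - 1, w 2, by omega, by omega, by omega, by omega,
      by omega, by omega, le_refl _⟩, ?_⟩
    intro v hv hle
    obtain ⟨e0, e1, e2, he0, he1, he2, hes, g0, g1, g2⟩ := (memI v).1 hv
    have l0 : v 0 ≤ w 0 := hle 0
    have l1 : v 1 ≤ w 1 := hle 1
    have l2 : v 2 ≤ w 2 := hle 2
    have e0' : v 0 = w 0 := by omega
    have e1' : v 1 = w 1 := by omega
    have e2' : v 2 = w 2 := by omega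
    funext i; fin_cases i
    · exact e0'
    · exact e1'
    · exact e2'

lemma strongEx : StrongExchange Iset := by
  intro u hu v hv i j hvi huj
  obtain ⟨a0, a0', a1, a1', a2, asum⟩ := (memMinGens u).1 hu
  obtain ⟨b0, b0', b1, b1', b2, bsum⟩ := (memMinGens v).1 hv
  have hne : i ≠ j := fun h => by rw [h] at hvi; omega
  refine ((memMinGens _).2 ?_).1
  fin_cases i <;> fin_cases j <;> simp_all [exch] <;> omega

lemma gen_le_a {d : ℕ} {a : Fin 3 → ℕ} (hEq : (Iset : Set (Mon 3)) = veronese 3 d a)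
    {g : Mon 3} (hg : g ∈ minGens Iset) : d = 7 ∧ ∀ i, g i ≤ a i := by
  obtain ⟨g0, g0', g1, g1', g2, gsum⟩ := (memMinGens g).1 hg
  have hgV : g ∈ veronese 3 d a := hEq ▸ hg.1
  obtain ⟨u, hdu, hua, huw⟩ := hgV
  have huI : u ∈ Iset := by
    rw [hEq]; exact ⟨u, hdu, hua, le_refl u⟩
  obtain ⟨e0, e1, e2, he0, he1, he2, hes, k0, k1, k2⟩ := (memI u).1 huI
  have l0 : u 0 ≤ g 0 := huw 0
  have l1 : u 1 ≤ g 1 := huw 1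
  have l2 : u 2 ≤ g 2 := huw 2
  rw [degree, Fin.sum_univ_three] at hdu
  have t0 : u 0 ≤ a 0 := hua 0
  have t1 : u 1 ≤ a 1 := hua 1
  have t2 : u 2 ≤ a 2 := hua 2
  have hd7 : d = 7 := by omega
  have r0 : g 0 ≤ a 0 := by omega
  have r1 : g 1 ≤ a 1 := by omega
  have r2 : g 2 ≤ a 2 := by omega
  refine ⟨hd7, fun i => ?_⟩
  fin_cases i
  · exact r0
  · exact r1
  · exact r2

/-- `I = x_1^2 x_2 · I_{(4;1,3,3)}` has the strong exchange property but
is not of Veronese type; in particular `x_2^4 x_3^3 ∈ I_{(7;3,4,3)}` while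
`x_2^4 x_3^3 ∉ I`, so `I ≠ I_{(7;3,4,3)}`. -/
theorem stmt_18 :
    StrongExchange (mulMon (![2,1,0] : Mon 3) (veronese 3 4 ![1,3,3])) ∧
    (¬ ∃ (d : ℕ) (a : Fin 3 → ℕ),
        mulMon (![2,1,0] : Mon 3) (veronese 3 4 ![1,3,3]) = veronese 3 d a) ∧
    (![0,4,3] : Mon 3) ∈ veronese 3 7 ![3,4,3] ∧
    (![0,4,3] : Mon 3) ∉ mulMon (![2,1,0] : Mon 3) (veronese 3 4 ![1,3,3]) ∧
    mulMon (![2,1,0] : Mon 3) (veronese 3 4 ![1,3,3]) ≠ veronese 3 7 ![3,4,3] := by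
  have hbadV : (![0,4,3] : Mon 3) ∈ veronese 3 7 ![3,4,3] := by
    refine ⟨![0,4,3], ?_, ?_, le_refl _⟩
    · rw [degree, Fin.sum_univ_three]; simp
    · intro i; fin_cases i <;> simp
  have hbadI : (![0,4,3] : Mon 3) ∉ Iset := by
    rw [memI]
    rintro ⟨e0, e1, e2, -, -, -, -, h0, -, -⟩
    simp at h0
  have hg1 : (![3,1,3] : Mon 3) ∈ minGens Iset := by
    rw [memMinGens]; norm_num; decide
  have hg2 : (![2,4,1] : Mon 3) ∈ minGens Iset := by
    rw [memMinGens]; norm_num; decide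
  have key : ¬ ∃ (d : ℕ) (a : Fin 3 → ℕ), (Iset : Set (Mon 3)) = veronese 3 d a := by
    rintro ⟨d, a, hEq⟩
    obtain ⟨hd7, h1⟩ := gen_le_a hEq hg1
    obtain ⟨-, h2⟩ := gen_le_a hEq hg2
    subst hd7
    have ha1 : 4 ≤ a 1 := by simpa using h2 1
    have ha2 : 3 ≤ a 2 := by simpa using h1 2
    have : (![0,4,3] : Mon 3) ∈ veronese 3 7 a := by
      refine ⟨![0,4,3], ?_, ?_, le_refl _⟩
      · rw [degree, Fin.sum_univ_three]; simp
      · intro i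
        fin_cases i
        · simp
        · simpa using ha1
        · simpa using ha2
    exact hbadI (hEq.symm ▸ this)
  refine ⟨strongEx, key, hbadV, hbadI, fun h => hbadI (by rw [show Iset = mulMon (![2,1,0] : Mon 3) (veronese 3 4 ![1,3,3]) from rfl, h]; exact hbadV)⟩
end

section
/- The ideal I = m·I_{(6;3,2,1,4)} in K[x_1,x_2,x_3,x_4], where m = (x_1,x_2,x_3,x_4), does not have the strong exchange property: x_1^4x_2^2x_3 and x_2^3x_4^4 are minimal generators of I, but x_1^4x_2^3 is not a minimal generator of I. -/
/-- The ideal `I = m · I_{(6;3,2,1,4)}` where `m = (x_1,x_2,x_3,x_4)` is the maximal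
ideal (all monomials with nonzero exponent vector). -/
def I19 : Set (Mon 4) := mulIdeal {w : Mon 4 | w ≠ 0} (veronese 4 6 ![3,2,1,4])

lemma deg_ge_of_mem_I19 (w : Mon 4) (hw : w ∈ I19) : 7 ≤ degree w := by
  obtain ⟨u, hu, v, ⟨u', hd, _, hle⟩, rfl⟩ := hw
  have h1 : 1 ≤ degree u := by
    rcases Nat.eq_zero_or_pos (degree u) with h | h
    · exfalso; apply hu
      funext i
      have := (Finset.sum_eq_zero_iff).mp h i (Finset.mem_univ i)
      simpa using this
    · exact h
  have h2 : (6 : ℕ) ≤ degree v := by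
    rw [← hd]; exact Finset.sum_le_sum (fun i _ => hle i)
  have h3 : degree (u + v) = degree u + degree v := by
    simp [degree, Finset.sum_add_distrib]
  omega

lemma eq_of_le_of_deg {n : ℕ} (u v : Mon n) (h : v ≤ u) (hd : degree u ≤ degree v) :
    v = u := by
  funext i
  by_contra hne
  have hlt : v i < u i := lt_of_le_of_ne (h i) hne
  have : degree v < degree u :=
    Finset.sum_lt_sum (fun i _ => h i) ⟨i, Finset.mem_univ i, hlt⟩
  omega

lemma not_mem_I19 : (![4,3,0,0] : Mon 4) ∉ I19 := by
  rintro ⟨u, hu, v, ⟨u', hd, hb, hle⟩, heq⟩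
  have hb' : ∀ i, u' i ≤ (![3,2,0,0] : Mon 4) i := by
    intro i
    have h1 := hle i
    have h2 := congrFun heq i
    have h3 := hb i
    simp only [Pi.add_apply] at h2
    fin_cases i <;> simp at h1 h2 h3 ⊢ <;> omega
  have key : degree u' ≤ 5 := by
    calc degree u' ≤ degree ![3,2,0,0] := Finset.sum_le_sum (fun i _ => hb' i)
    _ = 5 := by simp [degree, Fin.sum_univ_four]
  omega

lemma mem1 : (![4,2,1,0] : Mon 4) ∈ I19 := by
  refine ⟨![1,0,0,0], ?_, ![3,2,1,0], ⟨![3,2,1,0], ?_, ?_, le_refl _⟩, ?_⟩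
  · intro h
    have := congrFun h 0
    simp at this
  · simp [degree, Fin.sum_univ_four]
  · intro i; fin_cases i <;> simp
  · funext i; fin_cases i <;> simp

lemma mem2 : (![0,3,0,4] : Mon 4) ∈ I19 := by
  refine ⟨![0,1,0,0], ?_, ![0,2,0,4], ⟨![0,2,0,4], ?_, ?_, le_refl _⟩, ?_⟩
  · intro h
    have := congrFun h 1
    simp at this
  · simp [degree, Fin.sum_univ_four]
  · intro i; fin_cases i <;> simp
  · funext i; fin_cases i <;> simp

/-- `I = m·I_{(6;3,2,1,4)}` does not have the strong exchange property:
`x_1^4 x_2^2 x_3` and `x_2^3 x_4^4` are minimal generators of `I`, but `x_1^4 x_2^3`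
is not a minimal generator of `I`. -/
theorem stmt_19 :
    (![4,2,1,0] : Mon 4) ∈ minGens I19 ∧
    (![0,3,0,4] : Mon 4) ∈ minGens I19 ∧
    (![4,3,0,0] : Mon 4) ∉ minGens I19 ∧
    ¬ StrongExchange I19 := by
  have hd1 : degree (![4,2,1,0] : Mon 4) = 7 := by simp [degree, Fin.sum_univ_four]
  have hd2 : degree (![0,3,0,4] : Mon 4) = 7 := by simp [degree, Fin.sum_univ_four]
  have hmin1 : (![4,2,1,0] : Mon 4) ∈ minGens I19 := by
    refine ⟨mem1, fun v hv hle => ?_⟩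
    exact eq_of_le_of_deg _ _ hle (by rw [hd1]; exact deg_ge_of_mem_I19 v hv)
  have hmin2 : (![0,3,0,4] : Mon 4) ∈ minGens I19 := by
    refine ⟨mem2, fun v hv hle => ?_⟩
    exact eq_of_le_of_deg _ _ hle (by rw [hd2]; exact deg_ge_of_mem_I19 v hv)
  refine ⟨hmin1, hmin2, ?_, ?_⟩
  · intro h
    exact not_mem_I19 h.1
  · intro hSE
    have h := hSE _ hmin1 _ hmin2 2 1 (by decide) (by norm_num)
    have hexch : exch (![4,2,1,0] : Mon 4) 2 1 = ![4,3,0,0] := by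
      funext k; fin_cases k <;> simp [exch]
    rw [hexch] at h
    exact not_mem_I19 h
end
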